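/- Let n ≥ 2 be even and set ρ_{2n} = exp(πi/n) ∈ ℂ. Consider complex numbers u, v with v^{2n} = uⁿ(u − 1)(u + 1)^{2n−1} and u ∉ {0, 1, −1}. Then: (1) setting Y = v^{2n−1}/(u^{n−1}(u+1)^{2n−2}), one has Y^{2n} = (−u)ⁿ(−u − 1)(−u + 1)^{2n−1}, so the map y(u,v) = (−u, Y) preserves the curve; (2) the map x(u,v) = (u, ρ_{2n} v) preserves the curve; (3) on such points y(x(u,v)) equals x applied 2n−1 times to y(u,v), i.e. y ∘ x = x⁻¹ ∘ y; (4) if additionally v ≠ 0, then y(y(u,v)) = (u, −v), i.e. y² = xⁿ on such points. -/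

import Mathlib

open Complex

/-- The singular model `v^{2n} = uⁿ(u-1)(u+1)^{2n-1}` of `S_n` (for `n ≥ 2` even), with
`ρ_{2n} = exp(πi/n)`: the maps `x(u,v) = (u, ρ_{2n} v)` and
`y(u,v) = (-u, v^{2n-1}/(u^{n-1}(u+1)^{2n-2}))` preserve the curve, satisfy
`y ∘ x = x⁻¹ ∘ y`, and `y² = (u, -v)`. -/
theorem curve_Sn_singular_model_dicyclic_action (n : ℕ) (hn : 2 ≤ n) (hneven : Even n)
    (ρ₂ : ℂ) (hρ₂ : ρ₂ = Complex.exp (↑Real.pi * Complex.I / (n : ℂ)))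
    (u v : ℂ) (hcurve : v ^ (2 * n) = u ^ n * (u - 1) * (u + 1) ^ (2 * n - 1))
    (hu0 : u ≠ 0) (hu1 : u ≠ 1) (hu2 : u ≠ -1)
    (Y : ℂ) (hY : Y = v ^ (2 * n - 1) / (u ^ (n - 1) * (u + 1) ^ (2 * n - 2))) :
    Y ^ (2 * n) = (-u) ^ n * (-u - 1) * (-u + 1) ^ (2 * n - 1) ∧
    (ρ₂ * v) ^ (2 * n) = u ^ n * (u - 1) * (u + 1) ^ (2 * n - 1) ∧
    (((-u, (ρ₂ * v) ^ (2 * n - 1) / (u ^ (n - 1) * (u + 1) ^ (2 * n - 2))) : ℂ × ℂ)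
      = (-u, ρ₂⁻¹ * Y)) ∧
    (v ≠ 0 →
      (((-(-u)), Y ^ (2 * n - 1) / ((-u) ^ (n - 1) * (-u + 1) ^ (2 * n - 2))) : ℂ × ℂ)
        = (u, -v)) := by
  obtain ⟨k, hk⟩ : ∃ k, n = 2 * k + 2 := by
    rcases hneven with ⟨j, hj⟩; exact ⟨j - 1, by omega⟩
  subst hk
  simp only [show 2 * (2 * k + 2) - 1 = 4 * k + 3 by omega,
    show 2 * k + 2 - 1 = 2 * k + 1 by omega,
    show 2 * (2 * k + 2) - 2 = 4 * k + 2 by omega,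
    show 2 * (2 * k + 2) = 4 * k + 4 by omega,
    show 4 * k + 4 - 1 = 4 * k + 3 by omega,
    show 4 * k + 4 - 2 = 4 * k + 2 by omega] at hcurve hY ⊢
  have hu2' : u + 1 ≠ 0 := fun h => hu2 (by linear_combination h)
  have hd : u ^ (2 * k + 1) * (u + 1) ^ (4 * k + 2) ≠ 0 :=
    mul_ne_zero (pow_ne_zero _ hu0) (pow_ne_zero _ hu2')
  have hnC : ((2 * k + 2 : ℕ) : ℂ) ≠ 0 := Nat.cast_ne_zero.mpr (by omega)
  have hρpow : ρ₂ ^ (4 * k + 4) = 1 := by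
    rw [hρ₂, ← Complex.exp_nat_mul]
    rw [show ((4 * k + 4 : ℕ) : ℂ) * (↑Real.pi * Complex.I / ((2 * k + 2 : ℕ) : ℂ))
        = 2 * ↑Real.pi * Complex.I by
      have h2 := hnC
      push_cast at h2
      rw [show ((4 * k + 4 : ℕ) : ℂ) = 2 * ((2 * k + 2 : ℕ) : ℂ) by push_cast; ring]
      push_cast
      field_simp [h2]]
    exact Complex.exp_two_pi_mul_I
  have hρ0 : ρ₂ ≠ 0 := by rw [hρ₂]; exact Complex.exp_ne_zero _
  have hsign : (-u) ^ (2 * k + 2) = u ^ (2 * k + 2) := Even.neg_pow ⟨k + 1, by ring⟩ u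
  have hs1 : (-u + 1) ^ (4 * k + 3) = -(u - 1) ^ (4 * k + 3) := by
    rw [show -u + 1 = -(u - 1) by ring, Odd.neg_pow ⟨2 * k + 1, by ring⟩]
  refine ⟨?_, ?_, ?_, ?_⟩
  · rw [hY, div_pow, div_eq_iff (pow_ne_zero _ hd), ← pow_mul,
      show (4 * k + 3) * (4 * k + 4) = (4 * k + 4) * (4 * k + 3) from mul_comm _ _,
      pow_mul, hcurve, hsign, hs1]
    simp only [mul_pow, ← pow_mul]
    rw [show (2 * k + 2) * (4 * k + 3) = (2 * k + 2) + (2 * k + 1) * (4 * k + 4) by ring,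
      show (4 * k + 3) * (4 * k + 3) = 1 + (4 * k + 2) * (4 * k + 4) by ring,
      pow_add, pow_add]
    ring
  · rw [mul_pow, hρpow, one_mul, hcurve]
  · refine Prod.ext rfl ?_
    have h1 : ρ₂ ^ (4 * k + 3) = ρ₂⁻¹ := by
      refine eq_inv_of_mul_eq_one_right ?_
      calc ρ₂ * ρ₂ ^ (4 * k + 3) = ρ₂ ^ (4 * k + 4) := by ring
        _ = 1 := hρpow
    rw [mul_pow, h1, hY, mul_div_assoc]
  · intro hv
    refine Prod.ext (by simp) ?_
    have hsign' : (-u) ^ (2 * k + 1) = -u ^ (2 * k + 1) := Odd.neg_pow ⟨k, by ring⟩ u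
    have hs2 : (-u + 1) ^ (4 * k + 2) = (u - 1) ^ (4 * k + 2) := by
      rw [show -u + 1 = -(u - 1) by ring, Even.neg_pow ⟨2 * k + 1, by ring⟩]
    simp only [hsign', hs2]
    rw [hY, div_pow, div_div, div_eq_iff]
    · rw [← pow_mul,
        show (4 * k + 3) * (4 * k + 3) = 1 + (4 * k + 4) * (4 * k + 2) by ring,
        pow_add, pow_mul, hcurve, pow_one]
      simp only [mul_pow, ← pow_mul]
      rw [show (2 * k + 2) * (4 * k + 2) = (2 * k + 1) * (4 * k + 3) + (2 * k + 1) by ring,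
        show (4 * k + 3) * (4 * k + 2) = (4 * k + 2) * (4 * k + 3) by ring,
        pow_add]
      ring
    · exact mul_ne_zero (pow_ne_zero _ hd)
        (mul_ne_zero (neg_ne_zero.mpr (pow_ne_zero _ hu0))
          (pow_ne_zero _ (sub_ne_zero.mpr hu1)))
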